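/- The lopsided coamoeba of f equals the union over all r ∈ ℝ₊^N of the coamoebas of the polynomials f_r(z) = Σ_α r_α c_α z^α obtained by scaling the moduli of the coefficients: ℒ𝒜'(f) = ⋃_{r ∈ ℝ₊^N} 𝒜'(f_r). -/

import Mathlib

open Complex

lemma zpow_eq_abs_exp (z : ℂ) (hz : z ≠ 0) (k : ℤ) :
    z ^ k = ((‖z‖ : ℝ) : ℂ) ^ k * Complex.exp ((k : ℂ) * Complex.arg z * Complex.I) := by
  have := hz
  conv_lhs => rw [← Complex.norm_mul_exp_arg_mul_I z]
  rw [mul_zpow]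
  congr 1
  rw [← Complex.exp_int_mul]
  ring_nf

/-- The lopsided coamoeba of `f` (the set of `θ` whose list of unit vectors admits a
vanishing strictly positive combination) equals the union over all positive scalings
`r ∈ ℝ₊^N` of the coefficient moduli of the coamoebas of `f_r(z) = ∑ r_α c_α z^α`. -/
theorem stmt4 (n : ℕ) (A : Finset (Fin n → ℤ)) (c : (Fin n → ℤ) → ℂ)
    (hc : ∀ α ∈ A, c α ≠ 0) :
    {θ : Fin n → ℝ | ∃ r : (Fin n → ℤ) → ℝ, (∀ α ∈ A, 0 < r α) ∧
        ∑ α ∈ A, (r α : ℂ) *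
          Complex.exp (((Complex.arg (c α) + ∑ j, (α j : ℝ) * θ j : ℝ) : ℂ) * Complex.I) = 0} =
      {θ : Fin n → ℝ | ∃ r : (Fin n → ℤ) → ℝ, (∀ α ∈ A, 0 < r α) ∧
        ∃ z : Fin n → ℂ, (∀ j, z j ≠ 0) ∧
          ∑ α ∈ A, (r α : ℂ) * c α * ∏ j, z j ^ α j = 0 ∧
          ∀ j, ∃ m : ℤ, Complex.arg (z j) = θ j + 2 * Real.pi * m} := by
  ext θ
  simp only [Set.mem_setOf_eq]
  constructor
  · rintro ⟨r, hr, hsum⟩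
    refine ⟨fun α => r α / ‖c α‖, fun α hα => div_pos (hr α hα)
      (norm_pos_iff.mpr (hc α hα)), fun j => Complex.exp ((θ j : ℂ) * Complex.I),
      fun j => Complex.exp_ne_zero _, ?_, ?_⟩
    · rw [← hsum]
      apply Finset.sum_congr rfl
      intro α hα
      have hzpow : ∀ j, Complex.exp ((θ j : ℂ) * Complex.I) ^ (α j)
          = Complex.exp ((((α j : ℝ) * θ j : ℝ) : ℂ) * Complex.I) := by
        intro j
        rw [← Complex.exp_int_mul]
        push_cast
        ring_nf
      rw [Finset.prod_congr rfl fun j _ => hzpow j, ← Complex.exp_sum]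
      have h1 : (∑ j, (((α j : ℝ) * θ j : ℝ) : ℂ) * Complex.I)
          = ((∑ j, (α j : ℝ) * θ j : ℝ) : ℂ) * Complex.I := by
        rw [← Finset.sum_mul]
        norm_cast
      have hsplit : ((Complex.arg (c α) + ∑ j, (α j : ℝ) * θ j : ℝ) : ℂ) * Complex.I
          = (Complex.arg (c α) : ℂ) * Complex.I
            + ((∑ j, (α j : ℝ) * θ j : ℝ) : ℂ) * Complex.I := by
        push_cast
        ring
      rw [h1, hsplit, Complex.exp_add]
      conv_lhs => rw [← Complex.norm_mul_exp_arg_mul_I (c α)]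
      have habs : ((r α / ‖c α‖ : ℝ) : ℂ) * ((‖c α‖ : ℝ) : ℂ)
          = (r α : ℂ) := by
        rw [← ofReal_mul, div_mul_cancel₀]
        exact (norm_ne_zero_iff.mpr (hc α hα))
      calc ((r α / ‖c α‖ : ℝ) : ℂ)
            * ((‖c α‖ : ℂ) * Complex.exp ((Complex.arg (c α) : ℂ) * Complex.I))
            * Complex.exp (((∑ j, (α j : ℝ) * θ j : ℝ) : ℂ) * Complex.I)
          = ((r α / ‖c α‖ : ℝ) : ℂ) * ((‖c α‖ : ℝ) : ℂ)
            * (Complex.exp ((Complex.arg (c α) : ℂ) * Complex.I)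
              * Complex.exp (((∑ j, (α j : ℝ) * θ j : ℝ) : ℂ) * Complex.I)) := by ring
        _ = _ := by rw [habs]
    · intro j
      refine ⟨-(toIocDiv (mul_pos two_pos Real.pi_pos) (-Real.pi) (θ j)), ?_⟩
      rw [Complex.arg_exp_mul_I, ← self_sub_toIocDiv_zsmul (mul_pos two_pos Real.pi_pos)
        (-Real.pi) (θ j)]
      push_cast [zsmul_eq_mul]
      ring
  · rintro ⟨r, hr, z, hz, hsum, hm⟩
    choose m hmeq using hm
    refine ⟨fun α => r α * ‖c α‖ * ∏ j, ‖z j‖ ^ (α j),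
      fun α hα => by
        apply mul_pos (mul_pos (hr α hα) (norm_pos_iff.mpr (hc α hα)))
        exact Finset.prod_pos fun j _ => zpow_pos (norm_pos_iff.mpr (hz j)) _, ?_⟩
    rw [← hsum]
    apply Finset.sum_congr rfl
    intro α hα
    have hprod : (∏ j, z j ^ (α j)) =
        ((∏ j, ‖z j‖ ^ (α j) : ℝ) : ℂ) *
          Complex.exp ((∑ j, (α j : ℂ) * Complex.arg (z j)) * Complex.I) := by
      rw [Finset.prod_congr rfl fun j _ => zpow_eq_abs_exp (z j) (hz j) (α j),
        Finset.prod_mul_distrib, ← Complex.exp_sum, Finset.sum_mul]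
      push_cast
      ring_nf
      rw [Finset.sum_congr rfl fun x _ =>
        (by ring : ((α x : ℂ) * ((z x).arg : ℂ) * I) = I * (α x : ℂ) * ((z x).arg : ℂ))]
    have hargsum : (∑ j, (α j : ℂ) * Complex.arg (z j))
        = ((∑ j, (α j : ℝ) * θ j : ℝ) : ℂ)
          + ((∑ j, α j * m j : ℤ) : ℂ) * (2 * (Real.pi : ℂ)) := by
      push_cast
      rw [Finset.sum_mul, ← Finset.sum_add_distrib]
      apply Finset.sum_congr rfl
      intro j _
      rw [hmeq j]
      push_cast
      ring
    have h2pi : Complex.exp (((∑ j, α j * m j : ℤ) : ℂ) * (2 * (Real.pi : ℂ)) * Complex.I)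
        = 1 := by
      rw [mul_assoc]
      exact Complex.exp_int_mul_two_pi_mul_I _
    conv_rhs => rw [hprod, hargsum]
    rw [add_mul, Complex.exp_add, h2pi, mul_one]
    conv_rhs => rw [show c α = ((‖c α‖ : ℝ) : ℂ)
      * Complex.exp ((Complex.arg (c α) : ℂ) * Complex.I)
      from (Complex.norm_mul_exp_arg_mul_I (c α)).symm]
    have hsplit : ((Complex.arg (c α) + ∑ j, (α j : ℝ) * θ j : ℝ) : ℂ) * Complex.I
        = (Complex.arg (c α) : ℂ) * Complex.I
          + ((∑ j, (α j : ℝ) * θ j : ℝ) : ℂ) * Complex.I := by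
      push_cast
      ring
    rw [hsplit, Complex.exp_add]
    push_cast
    ring
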